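/- Let X be a tree of spaces over an oriented simplicial tree T, with distance d defined as the infimum of lengths of chains. Then: (a) d is a metric on X (the quotient pseudo-metric is a metric); (b) every ball of radius at most 1 in a vertex space is isometrically embedded in X, i.e. if p and q lie in a common ball of radius at most 1 of a vertex space X_v then d(p,q) equals the distance from p to q in X_v; and (c) every rung is isometrically embedded in X. -/

import Mathlib

/-- The data of a tree of spaces over an oriented simplicial tree: an oriented graph with
vertex set `V`, oriented edge set `E` and endpoint maps `ι`, `τ`; a metric space `X v` for
each vertex; an edge space `Xe e ⊆ X (ι e)` for each oriented edge; an attaching map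
`α e : X (ι e) → X (τ e)` (only its restriction to `Xe e` is relevant) and a coarse inverse
`β e : X (τ e) → X (ι e)` of it. -/
structure TreeOfSpacesData where
  V : Type
  E : Type
  ι : E → V
  τ : E → V
  X : V → Type
  met : ∀ v, MetricSpace (X v)
  Xe : ∀ e, Set (X (ι e))
  α : ∀ e, X (ι e) → X (τ e)
  β : ∀ e, X (τ e) → X (ι e)

namespace TreeOfSpacesData

instance (T : TreeOfSpacesData) (v : T.V) : MetricSpace (T.X v) := T.met v

/-- The condition that `β e` is a coarse inverse of `α e` on the edge space, uniformly over
all edges: this is the defining condition of a tree of spaces. -/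
def IsTreeOfSpaces (T : TreeOfSpacesData) : Prop :=
  ∃ C : ℝ, 0 ≤ C ∧
    (∀ e, ∀ x ∈ T.Xe e, dist (T.β e (T.α e x)) x ≤ C) ∧
    (∀ e, ∀ y ∈ T.α e '' T.Xe e, dist (T.α e (T.β e y)) y ≤ C)

/-- The underlying simple graph of the oriented graph `(V, E, ι, τ)`. -/
def graph (T : TreeOfSpacesData) : SimpleGraph T.V where
  Adj u v := u ≠ v ∧ ∃ e : T.E, (T.ι e = u ∧ T.τ e = v) ∨ (T.ι e = v ∧ T.τ e = u)
  symm := by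
    constructor
    rintro u v ⟨hne, e, h⟩
    exact ⟨hne.symm, e, h.symm⟩
  loopless := by
    constructor
    rintro v ⟨hne, -⟩
    exact hne rfl

/-- The oriented graph `(V, E, ι, τ)` is an oriented simplicial tree: the underlying simple
graph is a tree, there are no loops, and there are no multiple (or oppositely repeated)
edges. -/
def IsOrientedSimplicialTree (T : TreeOfSpacesData) : Prop :=
  T.graph.IsTree ∧ (∀ e : T.E, T.ι e ≠ T.τ e) ∧
    ∀ e e' : T.E,
      ((T.ι e = T.ι e' ∧ T.τ e = T.τ e') ∨ (T.ι e = T.τ e' ∧ T.τ e = T.ι e')) → e = e'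

/-- The points of the total space of a tree of spaces: the points of the vertex spaces,
together with the interior points `(x, t)`, `0 < t < 1`, of the rungs `{x} × [0,1]` over the
points `x` of the edge spaces.  (The endpoints `(x,0)` and `(x,1)` of a rung are identified
with `x ∈ X (ι e)` and `α e x ∈ X (τ e)` respectively, so this is exactly the quotient of
the disjoint union defining the total space.) -/
inductive Pt (T : TreeOfSpacesData) : Type
  | vert (v : T.V) (x : T.X v) : Pt T
  | rung (e : T.E) (x : T.X (T.ι e)) (hx : x ∈ T.Xe e) (t : ℝ)
      (ht0 : 0 < t) (ht1 : t < 1) : Pt T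

/-- `PieceDist T p q r` holds when `p` and `q` lie in a common piece (a vertex space or a
rung) in which their distance is `r`. -/
inductive PieceDist (T : TreeOfSpacesData) : Pt T → Pt T → ℝ → Prop
  | vert (v : T.V) (x y : T.X v) :
      PieceDist T (.vert v x) (.vert v y) (dist x y)
  | rung_rung (e : T.E) (x : T.X (T.ι e)) (hx : x ∈ T.Xe e) (s t : ℝ)
      (hs0 : 0 < s) (hs1 : s < 1) (ht0 : 0 < t) (ht1 : t < 1) :
      PieceDist T (.rung e x hx s hs0 hs1) (.rung e x hx t ht0 ht1) |s - t|
  | bot_rung (e : T.E) (x : T.X (T.ι e)) (hx : x ∈ T.Xe e) (t : ℝ)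
      (ht0 : 0 < t) (ht1 : t < 1) :
      PieceDist T (.vert (T.ι e) x) (.rung e x hx t ht0 ht1) t
  | top_rung (e : T.E) (x : T.X (T.ι e)) (hx : x ∈ T.Xe e) (t : ℝ)
      (ht0 : 0 < t) (ht1 : t < 1) :
      PieceDist T (.vert (T.τ e) (T.α e x)) (.rung e x hx t ht0 ht1) (1 - t)
  | bot_top (e : T.E) (x : T.X (T.ι e)) (hx : x ∈ T.Xe e) :
      PieceDist T (.vert (T.ι e) x) (.vert (T.τ e) (T.α e x)) 1
  | symm {p q : Pt T} {r : ℝ} : PieceDist T p q r → PieceDist T q p r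

/-- `ChainDist T p q r` holds when there is a chain from `p` to `q`, each consecutive pair of
points lying in a common piece, of total length `r`. -/
inductive ChainDist (T : TreeOfSpacesData) : Pt T → Pt T → ℝ → Prop
  | single {p q : Pt T} {r : ℝ} : PieceDist T p q r → ChainDist T p q r
  | cons {p q r : Pt T} {c c' : ℝ} :
      PieceDist T p q c → ChainDist T q r c' → ChainDist T p r (c + c')

/-- The distance on the total space of a tree of spaces: the infimum of the lengths of chains
joining two points (with value `∞` if there is no chain). -/
noncomputable def tdist (T : TreeOfSpacesData) (p q : Pt T) : ENNReal :=
  ⨅ r : {r : ℝ // ChainDist T p q r}, ENNReal.ofReal r.1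

end TreeOfSpacesData

/-! ### Auxiliary lemmas -/

namespace TreeOfSpacesData

variable {T : TreeOfSpacesData}

lemma PieceDist.nonneg {p q : T.Pt} {r : ℝ} (h : PieceDist T p q r) : 0 ≤ r := by
  induction h with
  | vert v x y => exact dist_nonneg
  | rung_rung e x hx s t _ _ _ _ => exact abs_nonneg _
  | bot_rung e x hx t ht0 ht1 => exact ht0.le
  | top_rung e x hx t ht0 ht1 => linarith
  | bot_top e x hx => norm_num
  | symm _ ih => exact ih

lemma ChainDist.nonneg {p q : T.Pt} {r : ℝ} (h : ChainDist T p q r) : 0 ≤ r := by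
  induction h with
  | single h => exact h.nonneg
  | cons h _ ih => have := h.nonneg; linarith

lemma ChainDist.trans {p q : T.Pt} {a : ℝ} (h : ChainDist T p q a) :
    ∀ {r : T.Pt} {b : ℝ}, ChainDist T q r b → ChainDist T p r (a + b) := by
  induction h with
  | single hp => exact fun h' => .cons hp h'
  | cons hpc _ ih =>
      intro r b h'
      rw [add_assoc]
      exact .cons hpc (ih h')

lemma ChainDist.snoc {p q r : T.Pt} {a b : ℝ} (h : ChainDist T p q a)
    (h' : PieceDist T q r b) : ChainDist T p r (a + b) :=
  h.trans (.single h')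

lemma ChainDist.symm {p q : T.Pt} {a : ℝ} (h : ChainDist T p q a) : ChainDist T q p a := by
  induction h with
  | single hp => exact .single hp.symm
  | cons hpc _ ih => rw [add_comm]; exact ih.snoc hpc.symm

lemma pieceDist_self (p : T.Pt) : PieceDist T p p 0 := by
  cases p with
  | vert v x => simpa using PieceDist.vert v x x
  | rung e x hx t ht0 ht1 => simpa using PieceDist.rung_rung e x hx t t ht0 ht1 ht0 ht1

lemma tdist_le {p q : T.Pt} {r : ℝ} (h : ChainDist T p q r) :
    T.tdist p q ≤ ENNReal.ofReal r :=
  iInf_le (fun r : {r : ℝ // ChainDist T p q r} => ENNReal.ofReal r.1) ⟨r, h⟩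

lemma le_tdist {p q : T.Pt} {L : ℝ} (h : ∀ r : ℝ, ChainDist T p q r → L ≤ r) :
    ENNReal.ofReal L ≤ T.tdist p q :=
  le_iInf fun r => ENNReal.ofReal_le_ofReal (h r.1 r.2)

lemma chain_lip {Φ : T.Pt → ℝ} (hΦ : ∀ {p q : T.Pt} {r : ℝ}, PieceDist T p q r → |Φ p - Φ q| ≤ r)
    {p q : T.Pt} {r : ℝ} (h : ChainDist T p q r) : |Φ p - Φ q| ≤ r := by
  induction h with
  | single hp => exact hΦ hp
  | @cons p q r c c' hpc _ ih =>
      calc |Φ p - Φ r| ≤ |Φ p - Φ q| + |Φ q - Φ r| := abs_sub_le _ _ _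
      _ ≤ c + c' := add_le_add (hΦ hpc) ih

lemma tdist_ge {Φ : T.Pt → ℝ} (hΦ : ∀ {p q : T.Pt} {r : ℝ}, PieceDist T p q r → |Φ p - Φ q| ≤ r)
    (p q : T.Pt) : ENNReal.ofReal |Φ p - Φ q| ≤ T.tdist p q :=
  le_tdist fun _ h => chain_lip hΦ h

/-! ### The cut function of an edge -/

/-- The graph with the (unoriented) edge corresponding to `e` removed. -/
def Gdel (T : TreeOfSpacesData) (e : T.E) : SimpleGraph T.V :=
  T.graph \ SimpleGraph.fromEdgeSet {s(T.ι e, T.τ e)}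

/-- `cut e v` : `v` is on the `ι e` side of the tree cut along `e`. -/
def cut (T : TreeOfSpacesData) (e : T.E) (v : T.V) : Prop :=
  (T.Gdel e).Reachable (T.ι e) v

lemma cut_iota (e : T.E) : T.cut e (T.ι e) := SimpleGraph.Reachable.refl _

lemma adj_iota_tau (e : T.E) (h : T.ι e ≠ T.τ e) : T.graph.Adj (T.ι e) (T.τ e) :=
  ⟨h, e, Or.inl ⟨rfl, rfl⟩⟩

lemma cut_tau (htree : T.IsOrientedSimplicialTree) (e : T.E) : ¬ T.cut e (T.τ e) := by
  have hadj := adj_iota_tau e (htree.2.1 e)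
  have hb := (SimpleGraph.isAcyclic_iff_forall_edge_isBridge.mp htree.1.IsAcyclic)
      (T.graph.mem_edgeSet.mpr hadj)
  exact SimpleGraph.isBridge_iff.mp hb

lemma edge_ne (htree : T.IsOrientedSimplicialTree) {e e' : T.E} (h : e' ≠ e) :
    s(T.ι e', T.τ e') ≠ s(T.ι e, T.τ e) := by
  intro hs
  rw [Sym2.eq_iff] at hs
  exact h (htree.2.2 e' e hs)

lemma gdel_adj (htree : T.IsOrientedSimplicialTree) {e e' : T.E} (h : e' ≠ e) :
    (T.Gdel e).Adj (T.ι e') (T.τ e') := by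
  rw [Gdel, SimpleGraph.sdiff_adj, SimpleGraph.fromEdgeSet_adj]
  refine ⟨adj_iota_tau e' (htree.2.1 e'), ?_⟩
  rintro ⟨hm, -⟩
  exact edge_ne htree h (Set.mem_singleton_iff.mp hm)

lemma cut_iff (htree : T.IsOrientedSimplicialTree) {e e' : T.E} (h : e' ≠ e) :
    T.cut e (T.ι e') ↔ T.cut e (T.τ e') :=
  ⟨fun hr => hr.trans (gdel_adj htree h).reachable,
   fun hr => hr.trans (gdel_adj htree h).symm.reachable⟩

lemma exists_cut_ne (htree : T.IsOrientedSimplicialTree) {v w : T.V} (hvw : v ≠ w) :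
    ∃ e : T.E, (T.cut e v ∧ ¬ T.cut e w) ∨ (¬ T.cut e v ∧ T.cut e w) := by
  classical
  obtain ⟨W⟩ := htree.1.isConnected v w
  obtain ⟨P, hp⟩ := W.toPath
  cases P with
  | nil => exact absurd rfl hvw
  | @cons _ u _ hadj q =>
    rw [SimpleGraph.Walk.cons_isPath_iff] at hp
    obtain ⟨hq, hvs⟩ := hp
    obtain ⟨hne, e, he⟩ := hadj
    have hqe : ∀ f ∈ q.edges, f ∈ (T.Gdel e).edgeSet := by
      intro f hf
      have hfG := q.edges_subset_edgeSet hf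
      have hfne : f ≠ s(T.ι e, T.τ e) := by
        intro hfe
        rcases he with ⟨h1, h2⟩ | ⟨h1, h2⟩
        · subst h1; subst h2; subst hfe
          exact hvs (q.fst_mem_support_of_mem_edges hf)
        · subst h1; subst h2; subst hfe
          exact hvs (q.snd_mem_support_of_mem_edges hf)
      rw [Gdel, SimpleGraph.edgeSet_sdiff, SimpleGraph.edgeSet_fromEdgeSet,
        SimpleGraph.edgeSet_sdiff_sdiff_isDiag]
      exact ⟨hfG, hfne⟩
    have hreach : (T.Gdel e).Reachable u w := ⟨q.transfer _ hqe⟩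
    have hbr : ¬ (T.Gdel e).Reachable (T.ι e) (T.τ e) := cut_tau htree e
    rcases he with ⟨h1, h2⟩ | ⟨h1, h2⟩
    · subst h1; subst h2
      refine ⟨e, Or.inl ⟨cut_iota e, ?_⟩⟩
      intro hcw
      exact hbr (hcw.trans hreach.symm)
    · subst h1; subst h2
      exact ⟨e, Or.inr ⟨cut_tau htree e, hreach⟩⟩

/-! ### The height function of an edge -/

open Classical in
/-- The "height over the cut along `e`" function on the total space. -/
noncomputable def phiE (T : TreeOfSpacesData) (e : T.E) : T.Pt → ℝ
  | .vert v _ => if T.cut e v then 0 else 1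
  | .rung e' _ _ t _ _ => if e' = e then t else if T.cut e (T.ι e') then 0 else 1

lemma phiE_lip (htree : T.IsOrientedSimplicialTree) (e : T.E) :
    ∀ {p q : T.Pt} {r : ℝ}, PieceDist T p q r → |T.phiE e p - T.phiE e q| ≤ r := by
  intro p q r h
  induction h with
  | vert v x y => simp [phiE, dist_nonneg]
  | rung_rung e' x hx s t _ _ _ _ =>
      by_cases h : e' = e <;> simp [phiE, h]
  | bot_rung e' x hx t ht0 ht1 =>
      by_cases h : e' = e
      · subst h
        simp [phiE, cut_iota e', abs_of_nonneg ht0.le]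
      · simp [phiE, h, ht0.le]
  | top_rung e' x hx t ht0 ht1 =>
      by_cases h : e' = e
      · subst h
        rw [show T.phiE e' (.vert (T.τ e') (T.α e' x)) = 1 by
          simp [phiE, cut_tau htree e']]
        simp [phiE]
        rw [abs_of_nonneg (by linarith)]
      · have hiff := cut_iff htree h
        simp only [phiE, if_neg h]
        by_cases hc : T.cut e (T.ι e')
        · rw [if_pos hc, if_pos (hiff.mp hc)]; simp; linarith
        · rw [if_neg hc, if_neg (fun hh => hc (hiff.mpr hh))]; simp; linarith
  | bot_top e' x hx =>
      by_cases h : e' = e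
      · subst h
        simp [phiE, cut_iota e', cut_tau htree e']
      · have hiff := cut_iff htree h
        simp only [phiE]
        by_cases hc : T.cut e (T.ι e')
        · rw [if_pos hc, if_pos (hiff.mp hc)]; norm_num
        · rw [if_neg hc, if_neg (fun hh => hc (hiff.mpr hh))]; norm_num
  | symm _ ih => rw [abs_sub_comm]; exact ih

/-! ### The radial function based at a point of a vertex space -/

open Classical in
noncomputable def fV (T : TreeOfSpacesData) (v : T.V) (x : T.X v) (w : T.V) (z : T.X w) : ℝ :=
  if h : w = v then min (dist x (h ▸ z)) 2 else 1

lemma fV_self (v : T.V) (x z : T.X v) : T.fV v x v z = min (dist x z) 2 := by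
  unfold fV
  rw [dif_pos rfl]

lemma fV_ne {v w : T.V} (h : w ≠ v) (x : T.X v) (z : T.X w) : T.fV v x w z = 1 := by
  unfold fV
  rw [dif_neg h]

lemma fV_nonneg (v : T.V) (x : T.X v) (w : T.V) (z : T.X w) : 0 ≤ T.fV v x w z := by
  unfold fV
  split
  · exact le_min dist_nonneg (by norm_num)
  · norm_num

lemma fV_le_two (v : T.V) (x : T.X v) (w : T.V) (z : T.X w) : T.fV v x w z ≤ 2 := by
  unfold fV
  split
  · exact min_le_right _ _
  · norm_num

lemma fV_lip (v : T.V) (x : T.X v) (w : T.V) (z z' : T.X w) :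
    |T.fV v x w z - T.fV v x w z'| ≤ dist z z' := by
  by_cases h : w = v
  · subst h
    rw [fV_self, fV_self]
    refine le_trans (abs_min_sub_min_le_max _ _ _ _) ?_
    rw [sub_self, abs_zero]
    rw [max_eq_left (abs_nonneg _)]
    rw [dist_comm x z, dist_comm x z']
    exact abs_dist_sub_le z z' x
  · rw [fV_ne h, fV_ne h, sub_self, abs_zero]
    exact dist_nonneg

lemma fV_edge (htree : T.IsOrientedSimplicialTree) (v : T.V) (x : T.X v) (e' : T.E)
    (z : T.X (T.ι e')) : |T.fV v x (T.τ e') (T.α e' z) - T.fV v x (T.ι e') z| ≤ 1 := by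
  have hne := htree.2.1 e'
  by_cases h : T.ι e' = v
  · have h' : T.τ e' ≠ v := fun hh => hne (h.trans hh.symm)
    rw [fV_ne h', abs_sub_comm, abs_le]
    have h2 := T.fV_le_two v x (T.ι e') z
    have h0 := T.fV_nonneg v x (T.ι e') z
    constructor <;> linarith
  · rw [fV_ne h, abs_le]
    have h2 := T.fV_le_two v x (T.τ e') (T.α e' z)
    have h0 := T.fV_nonneg v x (T.τ e') (T.α e' z)
    constructor <;> linarith

noncomputable def psiV (T : TreeOfSpacesData) (v : T.V) (x : T.X v) : T.Pt → ℝ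
  | .vert w z => T.fV v x w z
  | .rung e' z _ t _ _ => (1 - t) * T.fV v x (T.ι e') z + t * T.fV v x (T.τ e') (T.α e' z)

lemma psiV_lip (htree : T.IsOrientedSimplicialTree) (v : T.V) (x : T.X v) :
    ∀ {p q : T.Pt} {r : ℝ}, PieceDist T p q r → |T.psiV v x p - T.psiV v x q| ≤ r := by
  intro p q r h
  induction h with
  | vert w z z' => exact fV_lip v x w z z'
  | rung_rung e' z hz s t _ _ _ _ =>
      simp only [psiV]
      rw [show (1 - s) * T.fV v x (T.ι e') z + s * T.fV v x (T.τ e') (T.α e' z) -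
          ((1 - t) * T.fV v x (T.ι e') z + t * T.fV v x (T.τ e') (T.α e' z)) =
          (s - t) * (T.fV v x (T.τ e') (T.α e' z) - T.fV v x (T.ι e') z) by ring]
      rw [abs_mul]
      exact mul_le_of_le_one_right (abs_nonneg _) (fV_edge htree v x e' z)
  | bot_rung e' z hz t ht0 ht1 =>
      simp only [psiV]
      rw [show T.fV v x (T.ι e') z - ((1 - t) * T.fV v x (T.ι e') z +
          t * T.fV v x (T.τ e') (T.α e' z)) =
          t * (T.fV v x (T.ι e') z - T.fV v x (T.τ e') (T.α e' z)) by ring]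
      rw [abs_mul, abs_of_nonneg ht0.le, abs_sub_comm]
      exact mul_le_of_le_one_right ht0.le (fV_edge htree v x e' z)
  | top_rung e' z hz t ht0 ht1 =>
      simp only [psiV]
      rw [show T.fV v x (T.τ e') (T.α e' z) - ((1 - t) * T.fV v x (T.ι e') z +
          t * T.fV v x (T.τ e') (T.α e' z)) =
          (1 - t) * (T.fV v x (T.τ e') (T.α e' z) - T.fV v x (T.ι e') z) by ring]
      rw [abs_mul, abs_of_nonneg (by linarith : (0:ℝ) ≤ 1 - t)]
      exact mul_le_of_le_one_right (by linarith) (fV_edge htree v x e' z)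
  | bot_top e' z hz =>
      simp only [psiV]
      rw [abs_sub_comm]
      exact fV_edge htree v x e' z
  | symm _ ih => rw [abs_sub_comm]; exact ih

lemma tdist_zero_eq {p q : T.Pt} (h : T.tdist p q = 0) {Φ : T.Pt → ℝ}
    (hΦ : ∀ {p q : T.Pt} {r : ℝ}, PieceDist T p q r → |Φ p - Φ q| ≤ r) : Φ p = Φ q := by
  have h1 := tdist_ge hΦ p q
  rw [h] at h1
  rw [nonpos_iff_eq_zero, ENNReal.ofReal_eq_zero] at h1
  have := abs_nonneg (Φ p - Φ q)
  have : |Φ p - Φ q| = 0 := le_antisymm h1 this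
  rw [abs_eq_zero, sub_eq_zero] at this
  exact this

end TreeOfSpacesData

open TreeOfSpacesData in
/-- The chain-length distance on the total space of a tree of spaces: (a) is a metric (the
quotient pseudo-metric is reflexive, symmetric, satisfies the triangle inequality, and
separates points); (b) balls of radius at most 1 in vertex spaces are isometrically embedded;
(c) rungs are isometrically embedded. -/
theorem treeOfSpaces_dist_is_metric (T : TreeOfSpacesData)
    (htree : T.IsOrientedSimplicialTree) (hT : T.IsTreeOfSpaces) :
    -- (a) the quotient pseudo-metric is a metric
    ((∀ p : T.Pt, T.tdist p p = 0) ∧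
     (∀ p q : T.Pt, T.tdist p q = T.tdist q p) ∧
     (∀ p q r : T.Pt, T.tdist p r ≤ T.tdist p q + T.tdist q r) ∧
     (∀ p q : T.Pt, T.tdist p q = 0 → p = q)) ∧
    -- (b) balls of radius ≤ 1 in vertex spaces are isometrically embedded
    (∀ (v : T.V) (x y z : T.X v) (r : ℝ), r ≤ 1 → dist z x ≤ r → dist z y ≤ r →
      T.tdist (.vert v x) (.vert v y) = ENNReal.ofReal (dist x y)) ∧
    -- (c) rungs are isometrically embedded
    (∀ (e : T.E) (x : T.X (T.ι e)) (hx : x ∈ T.Xe e),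
      (∀ (s t : ℝ) (hs0 : 0 < s) (hs1 : s < 1) (ht0 : 0 < t) (ht1 : t < 1),
        T.tdist (.rung e x hx s hs0 hs1) (.rung e x hx t ht0 ht1) =
          ENNReal.ofReal |s - t|) ∧
      (∀ (t : ℝ) (ht0 : 0 < t) (ht1 : t < 1),
        T.tdist (.vert (T.ι e) x) (.rung e x hx t ht0 ht1) = ENNReal.ofReal t ∧
        T.tdist (.vert (T.τ e) (T.α e x)) (.rung e x hx t ht0 ht1) =
          ENNReal.ofReal (1 - t)) ∧
      T.tdist (.vert (T.ι e) x) (.vert (T.τ e) (T.α e x)) = 1) := by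
  refine ⟨⟨?_, ?_, ?_, ?_⟩, ?_, ?_⟩
  · -- reflexivity
    intro p
    refine le_antisymm ?_ zero_le
    have := tdist_le (ChainDist.single (pieceDist_self p))
    simpa using this
  · -- symmetry
    intro p q
    refine le_antisymm ?_ ?_ <;>
      exact le_iInf fun r => tdist_le r.2.symm
  · -- triangle inequality
    intro p q r
    have h1 : T.tdist p q + T.tdist q r
        = ⨅ (a : {a : ℝ // ChainDist T p q a}) (b : {b : ℝ // ChainDist T q r b}),
          (ENNReal.ofReal a.1 + ENNReal.ofReal b.1) := by
      rw [tdist, tdist, ENNReal.iInf_add]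
      exact iInf_congr fun a => ENNReal.add_iInf
    rw [h1]
    exact le_iInf fun a => le_iInf fun b =>
      (tdist_le (a.2.trans b.2)).trans_eq (ENNReal.ofReal_add a.2.nonneg b.2.nonneg)
  · -- separation
    intro p q h
    cases p with
    | vert v x =>
      cases q with
      | vert w y =>
        by_cases hvw : v = w
        · subst hvw
          have hval := tdist_zero_eq h (psiV_lip htree v x)
          simp only [psiV, fV_self, dist_self] at hval
          rw [min_eq_left (by norm_num : (0:ℝ) ≤ 2)] at hval
          have hd0 : dist x y = 0 := by
            rcases le_or_gt (dist x y) 2 with hh | hh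
            · rw [min_eq_left hh] at hval; exact hval.symm
            · rw [min_eq_right hh.le] at hval; norm_num at hval
          rw [dist_eq_zero.mp hd0]
        · obtain ⟨e, hcut⟩ := exists_cut_ne htree hvw
          have hval := tdist_zero_eq h (phiE_lip htree e)
          simp only [phiE] at hval
          rcases hcut with ⟨h1, h2⟩ | ⟨h1, h2⟩
          · rw [if_pos h1, if_neg h2] at hval; norm_num at hval
          · rw [if_neg h1, if_pos h2] at hval; norm_num at hval
      | rung e x' hx' t ht0 ht1 =>
        have hval := tdist_zero_eq h (phiE_lip htree e)
        simp only [phiE, eq_self_iff_true, if_true] at hval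
        by_cases hc : T.cut e v
        · rw [if_pos hc] at hval; linarith
        · rw [if_neg hc] at hval; linarith
    | rung e x' hx' s hs0 hs1 =>
      cases q with
      | vert w y =>
        have hval := tdist_zero_eq h (phiE_lip htree e)
        simp only [phiE, eq_self_iff_true, if_true] at hval
        by_cases hc : T.cut e w
        · rw [if_pos hc] at hval; linarith
        · rw [if_neg hc] at hval; linarith
      | rung e' x'' hx'' t ht0 ht1 =>
        by_cases hee : e' = e
        · subst hee
          have hval := tdist_zero_eq h (phiE_lip htree e')
          simp only [phiE, eq_self_iff_true, if_true] at hval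
          subst hval
          have hval2 := tdist_zero_eq h (psiV_lip htree (T.ι e') x')
          have hτ : T.τ e' ≠ T.ι e' := fun hh => (htree.2.1 e') hh.symm
          simp only [psiV, fV_self, dist_self, fV_ne hτ] at hval2
          rw [min_eq_left (by norm_num : (0:ℝ) ≤ 2)] at hval2
          have hmin : min (dist x' x'') 2 = 0 := by nlinarith [hval2]
          have hd0 : dist x' x'' = 0 := by
            rcases le_or_gt (dist x' x'') 2 with hh | hh
            · rw [min_eq_left hh] at hmin; exact hmin
            · rw [min_eq_right hh.le] at hmin; norm_num at hmin
          have hxx : x' = x'' := dist_eq_zero.mp hd0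
          subst hxx
          rfl
        · have hval := tdist_zero_eq h (phiE_lip htree e)
          simp only [phiE, eq_self_iff_true, if_true, if_neg hee] at hval
          by_cases hc : T.cut e (T.ι e')
          · rw [if_pos hc] at hval; linarith
          · rw [if_neg hc] at hval; linarith
  · -- (b) balls of radius ≤ 1 in vertex spaces
    intro v x y z r hr hzx hzy
    refine le_antisymm (tdist_le (ChainDist.single (PieceDist.vert v x y))) ?_
    have hd : dist x y ≤ 2 := by
      have h1 := dist_triangle x z y
      have h2 : dist x z = dist z x := dist_comm x z
      linarith
    have hge := tdist_ge (psiV_lip htree v x) (.vert v x) (.vert v y)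
    simp only [psiV, fV_self, dist_self] at hge
    rw [min_eq_left (by norm_num : (0:ℝ) ≤ 2), min_eq_left hd, zero_sub, abs_neg,
      abs_of_nonneg dist_nonneg] at hge
    exact hge
  · -- (c) rungs
    intro e x hx
    refine ⟨?_, ?_, ?_⟩
    · intro s t hs0 hs1 ht0 ht1
      refine le_antisymm
        (tdist_le (ChainDist.single (PieceDist.rung_rung e x hx s t hs0 hs1 ht0 ht1))) ?_
      have hge := tdist_ge (phiE_lip htree e)
        (.rung e x hx s hs0 hs1) (.rung e x hx t ht0 ht1)
      simpa only [phiE, eq_self_iff_true, if_true] using hge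
    · intro t ht0 ht1
      constructor
      · refine le_antisymm
          (tdist_le (ChainDist.single (PieceDist.bot_rung e x hx t ht0 ht1))) ?_
        have hge := tdist_ge (phiE_lip htree e)
          (.vert (T.ι e) x) (.rung e x hx t ht0 ht1)
        simp only [phiE, eq_self_iff_true, if_true, if_pos (cut_iota e), zero_sub, abs_neg,
          abs_of_nonneg ht0.le] at hge
        exact hge
      · refine le_antisymm
          (tdist_le (ChainDist.single (PieceDist.top_rung e x hx t ht0 ht1))) ?_
        have hge := tdist_ge (phiE_lip htree e)
          (.vert (T.τ e) (T.α e x)) (.rung e x hx t ht0 ht1)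
        simp only [phiE, eq_self_iff_true, if_true, if_neg (cut_tau htree e),
          abs_of_nonneg (by linarith : (0:ℝ) ≤ 1 - t)] at hge
        exact hge
    · refine le_antisymm ?_ ?_
      · have := tdist_le (ChainDist.single (PieceDist.bot_top e x hx))
        simpa using this
      · have hge := tdist_ge (phiE_lip htree e)
          (.vert (T.ι e) x) (.vert (T.τ e) (T.α e x))
        simp only [phiE, if_pos (cut_iota e), if_neg (cut_tau htree e), zero_sub,
          abs_neg, abs_one] at hge
        simpa using hge
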